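/- Let G be an abelian group with finite monoid generating set A = {a₁,…,a_m}. There exists k such that for every non-geodesic word u over A there is a tuple n = (n₁,…,n_m) with n ≤ n(u) componentwise and Σᵢ nᵢ ≤ k such that the word a₁^{n₁}⋯a_m^{n_m} is non-geodesic, where n(u) records the number of occurrences of each letter aᵢ in u. -/

import Mathlib

/-! Words over a finite monoid generating set of a group, word length,
directed Cayley-graph distance, paths, asynchronous fellow travelling,
and the falsification-by-fellow-traveller property. -/

variable {A G : Type*} [Group G]

/-- The value in `G` of a word over the alphabet `A`. -/
def evalWord (π : A → G) (w : List A) : G := (w.map π).prod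

/-- `π : A → G` is a monoid generating set: every element is the value of a word. -/
def Generates (π : A → G) : Prop := ∀ g : G, ∃ w : List A, evalWord π w = g

/-- Word length of a group element: the least length of a word representing it. -/
noncomputable def wordLen (π : A → G) (g : G) : ℕ :=
  sInf {n | ∃ w : List A, evalWord π w = g ∧ w.length = n}

/-- Directed Cayley graph distance. -/
noncomputable def cayleyDist (π : A → G) (g h : G) : ℕ := wordLen π (g⁻¹ * h)

/-- The path in the Cayley graph determined by a word (constant after the end). -/
def pathOf (π : A → G) (w : List A) (t : ℕ) : G := evalWord π (w.take t)

/-- A word is geodesic if its length is the word length of its value. -/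
noncomputable def IsGeodesicWord (π : A → G) (w : List A) : Prop :=
  w.length = wordLen π (evalWord π w)

/-- `q` asynchronously `δ`-tracks `p`: there is a monotone proper
reparametrization `f` with `d(p t, q (f t)) ≤ δ` for all `t`. -/
def AsyncTracks (π : A → G) (δ : ℕ) (p q : ℕ → G) : Prop :=
  ∃ f : ℕ → ℕ, Monotone f ∧ (∀ N : ℕ, ∃ t, N ≤ f t) ∧
    ∀ t, cayleyDist π (p t) (q (f t)) ≤ δ

/-- Two paths asynchronously `δ`-fellow travel. -/
def AsyncFellow (π : A → G) (δ : ℕ) (p q : ℕ → G) : Prop :=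
  AsyncTracks π δ p q ∧ AsyncTracks π δ q p

/-- The falsification by fellow traveller property with constant `δ`:
every non-geodesic word is asynchronously `δ`-fellow travelled by a strictly
shorter word with the same value. -/
noncomputable def FFTP (π : A → G) (δ : ℕ) : Prop :=
  ∀ w : List A, ¬ IsGeodesicWord π w →
    ∃ v : List A, evalWord π v = evalWord π w ∧ v.length < w.length ∧
      AsyncFellow π δ (pathOf π w) (pathOf π v)

section Aux

variable {m : ℕ} {G : Type*} [CommGroup G]

/-- The canonical word `a₁^{n₁} ⋯ a_m^{n_m}`. -/
private def canonWord (n : Fin m → ℕ) : List (Fin m) :=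
  (List.finRange m).flatMap fun i => List.replicate (n i) i

private lemma count_canonWord (n : Fin m → ℕ) (i : Fin m) :
    (canonWord n).count i = n i := by
  classical
  rw [canonWord, List.count_flatMap]
  have : (List.map (List.count i ∘ fun j => List.replicate (n j) j)
      (List.finRange m)).sum = ∑ j : Fin m, (List.replicate (n j) j).count i := by
    rw [Fin.sum_univ_def]; simp [Function.comp_def]
  rw [this]
  have : ∀ j : Fin m, (List.replicate (n j) j).count i = if j = i then n j else 0 := by
    intro j
    by_cases h : j = i
    · subst h; simp
    · simp [List.count_replicate, Ne.symm h, h]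
  simp_rw [this]
  simp

private lemma length_eq_sum_count (u : List (Fin m)) :
    u.length = ∑ i : Fin m, u.count i := by
  classical
  rw [← List.sum_toFinset_count_eq_length u]
  exact Finset.sum_subset (Finset.subset_univ _) (by
    intro x _ hx
    have hxu : x ∉ u := fun h => hx (List.mem_toFinset.2 h)
    exact List.count_eq_zero_of_not_mem hxu)

private lemma evalWord_eq_prod (π : Fin m → G) (u : List (Fin m)) :
    evalWord π u = ∏ i, π i ^ u.count i := by
  classical
  induction u with
  | nil => simp [evalWord]
  | cons a u ih =>
    have : evalWord π (a :: u) = π a * evalWord π u := by simp [evalWord]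
    rw [this, ih]
    have hc : ∀ i : Fin m, (a :: u).count i = u.count i + (if a = i then 1 else 0) := by
      intro i; simp [List.count_cons]
    simp_rw [hc, pow_add]
    rw [Finset.prod_mul_distrib]
    have : (∏ i : Fin m, π i ^ (if a = i then 1 else 0)) = π a := by
      simp [pow_ite]
    rw [this, mul_comm]

private lemma isGeodesic_iff_canon (π : Fin m → G) (u : List (Fin m)) :
    IsGeodesicWord π u ↔ IsGeodesicWord π (canonWord fun i => u.count i) := by
  have heval : evalWord π (canonWord fun i => u.count i) = evalWord π u := by
    rw [evalWord_eq_prod, evalWord_eq_prod]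
    simp [count_canonWord]
  have hlen : (canonWord fun i => u.count i).length = u.length := by
    rw [length_eq_sum_count, length_eq_sum_count u]
    simp [count_canonWord]
  unfold IsGeodesicWord
  rw [heval, hlen]

end Aux

/-- Key combinatorial claim of Proposition 4.4: in an abelian group with monoid
generating set a₁,…,a_m, there is a bound k such that every non-geodesic word u
admits a componentwise smaller exponent tuple n with ∑ nᵢ ≤ k for which the word
a₁^{n₁}⋯a_m^{n_m} is already non-geodesic. -/
theorem abelian_nongeodesic_bounded_witness {m : ℕ} {G : Type*} [CommGroup G]
    (π : Fin m → G) (hgen : Generates π) :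
    ∃ k : ℕ, ∀ u : List (Fin m), ¬ IsGeodesicWord π u →
      ∃ n : Fin m → ℕ, (∀ i, n i ≤ u.count i) ∧ (∑ i, n i) ≤ k ∧
        ¬ IsGeodesicWord π ((List.finRange m).flatMap fun i => List.replicate (n i) i) := by
  classical
  set S : Set (Fin m → ℕ) := {n | ¬ IsGeodesicWord π (canonWord n)} with hS
  set M : Set (Fin m → ℕ) := {n | n ∈ S ∧ ∀ x ∈ S, ¬ x < n} with hMdef
  have hpwoM : M.IsPWO := Set.isPWO_of_wellQuasiOrderedLE M
  have hM : M.Finite := by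
    refine IsAntichain.finite_of_partiallyWellOrderedOn (r := (· ≤ ·)) ?_ hpwoM
    intro a ha b hb hne hle
    exact hb.2 a ha.1 (lt_of_le_of_ne hle hne)
  refine ⟨hM.toFinset.sup fun n => ∑ i, n i, ?_⟩
  intro u hu
  have hmem : (fun i => u.count i) ∈ S := by
    rw [hS]; exact fun h => hu ((isGeodesic_iff_canon π u).2 h)
  -- find a minimal element of S below the count vector
  set T : Set (Fin m → ℕ) := {x | x ∈ S ∧ x ≤ fun i => u.count i} with hT
  have hTwf : T.IsWF := (Set.isPWO_of_wellQuasiOrderedLE T).isWF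
  have hTne : T.Nonempty := ⟨fun i => u.count i, hmem, le_refl _⟩
  set t := hTwf.min hTne with ht
  have htT : t ∈ T := hTwf.min_mem hTne
  have htM : t ∈ M := by
    refine ⟨htT.1, fun x hx hlt => ?_⟩
    exact hTwf.not_lt_min hTne ⟨hx, le_trans hlt.le htT.2⟩ hlt
  refine ⟨t, fun i => htT.2 i, ?_, htT.1⟩
  exact Finset.le_sup (f := fun n => ∑ i, n i) (hM.mem_toFinset.2 htM)
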